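/- Let G be a strongly connected digraph with n vertices and m edges, and let L(G) be its line digraph. The Kemeny constant of the simple random walk on L(G) equals the Kemeny constant of the simple random walk on G plus m - n: K(L(G)) = K(G) + m - n. -/

import Mathlib

/-! A digraph on a finite vertex type `V` is given by its edge set `E : Finset (V × V)`. -/

variable {V : Type*} [Fintype V] [DecidableEq V]

/-- The outdegree of a vertex `v`: the number of edges with tail `v`. -/
def outdeg (E : Finset (V × V)) (v : V) : ℕ := (E.filter fun e => e.1 = v).card

/-- The indegree of a vertex `v`: the number of edges with head `v`. -/
def indeg (E : Finset (V × V)) (v : V) : ℕ := (E.filter fun e => e.2 = v).card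

/-- The edge set of the line digraph: its vertices are the edges of `G`, with an edge
`e → f` exactly when the head of `e` is the tail of `f`. -/
def lineE (E : Finset (V × V)) : Finset ({e // e ∈ E} × {e // e ∈ E}) :=
  Finset.univ.filter fun p => (p.1 : V × V).2 = (p.2 : V × V).1

/-- Strong connectivity: every vertex can reach every other vertex along directed edges. -/
def StronglyConnected (E : Finset (V × V)) : Prop :=
  ∀ u v : V, Relation.ReflTransGen (fun a b => (a, b) ∈ E) u v

/-- The transition matrix of the simple random walk on the digraph `E`: from `i`, move to
each out-neighbour with probability `1 / d⁺(i)`. -/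
noncomputable def transMat (E : Finset (V × V)) : Matrix V V ℝ :=
  fun i j => if (i, j) ∈ E then (outdeg E i : ℝ)⁻¹ else 0

/-- The Kemeny constant of `P`, defined spectrally as `∑_{λ ≠ 1} 1/(1-λ)`, the sum running
over the roots (with multiplicity) of the characteristic polynomial of `P` over `ℂ`,
with one copy of the eigenvalue `1` removed. -/
noncomputable def kemeny {n : Type*} [Fintype n] [DecidableEq n] (P : Matrix n n ℝ) : ℂ :=
  (((P.map (Complex.ofReal)).charpoly.roots.erase 1).map fun z => (1 - z)⁻¹).sum

/-- `π` is a stationary distribution of `P`: positive, summing to `1`, with `πᵀ P = πᵀ`. -/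
def IsStationaryDist {n : Type*} [Fintype n] (P : Matrix n n ℝ) (π : n → ℝ) : Prop :=
  (∀ i, 0 < π i) ∧ (∑ i, π i = 1) ∧ ∀ j, ∑ i, π i * P i j = π j

/-- `f` is (the parent map of) an oriented spanning tree of `E` rooted at `u`: the root is
a fixed point, every other vertex `v` has its unique out-edge `(v, f v) ∈ E`, and iterating
`f` from any vertex reaches the root. -/
def IsSpanTree (E : Finset (V × V)) (u : V) (f : V → V) : Prop :=
  f u = u ∧ (∀ v, v ≠ u → (v, f v) ∈ E) ∧ ∀ v, ∃ k : ℕ, f^[k] v = u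

/-- The number of oriented spanning trees of `E` rooted at `u`. -/
noncomputable def kappa (E : Finset (V × V)) (u : V) : ℕ :=
  Nat.card {f : V → V // IsSpanTree E u f}

/-- `σ` is (the successor map of) an Eulerian circuit of `E`: a permutation of the edges
such that each edge is followed by an edge starting at its head, acting transitively on
the edges (a single closed walk through all edges). Eulerian circuits, counted up to
cyclic rotation, correspond bijectively to such permutations. -/
def IsEulerSucc (E : Finset (V × V)) (σ : Equiv.Perm {e // e ∈ E}) : Prop :=
  (∀ e : {e // e ∈ E}, (e : V × V).2 = ((σ e : {e // e ∈ E}) : V × V).1) ∧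
    ∀ e f : {e // e ∈ E}, ∃ k : ℕ, (σ ^ k) e = f

/-- The number of Eulerian circuits of `E`. -/
noncomputable def eulerCount (E : Finset (V × V)) : ℕ :=
  Nat.card {σ : Equiv.Perm {e // e ∈ E} // IsEulerSucc E σ}

/-- The `k`-blow-up of `E`: each vertex `i` becomes the class `{i} × Fin k`, with all edges
from the class of `i` to the class of `j` whenever `(i, j)` is an edge. -/
def blowup (E : Finset (V × V)) (k : ℕ) : Finset ((V × Fin k) × (V × Fin k)) :=
  Finset.univ.filter fun p => (p.1.1, p.2.1) ∈ E

/-- The spanning tree enumerator of `E` rooted at `u`, with edge weights induced by vertex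
indeterminates `w` (the edge `(v, z)` has weight `w z`): the sum over all oriented spanning
trees rooted at `u` of the product of the weights of their edges. -/
noncomputable def treeEnum {R : Type*} [CommRing R] (E : Finset (V × V)) (w : V → R)
    (u : V) : R :=
  ∑ᶠ (f : V → V) (_ : IsSpanTree E u f), ∏ v ∈ Finset.univ.erase u, w (f v)


open Matrix Polynomial

open Matrix Polynomial

lemma charpoly_eval'' {n : Type*} [Fintype n] [DecidableEq n] (M : Matrix n n ℂ) (x : ℂ) :
    M.charpoly.eval x = (x • (1 : Matrix n n ℂ) - M).det := by
  rw [Matrix.charpoly, _root_.eval_det, Matrix.matPolyEquiv_charmatrix]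
  congr 1
  rw [eval_sub, eval_X, eval_C]
  congr 1
  ext i j
  simp [Matrix.scalar_apply, Matrix.smul_apply, Matrix.one_apply, Matrix.diagonal]

lemma charpoly_mul_comm_pow {m n : Type*} [Fintype m] [DecidableEq m] [Fintype n] [DecidableEq n]
    (A : Matrix m n ℂ) (B : Matrix n m ℂ) :
    (A * B).charpoly * X ^ Fintype.card n = (B * A).charpoly * X ^ Fintype.card m := by
  apply Polynomial.eq_of_infinite_eval_eq
  refine Set.Infinite.mono ?_ (Set.finite_singleton (0:ℂ)).infinite_compl
  intro x hx
  have hx : x ≠ 0 := hx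
  simp only [Set.mem_setOf_eq, eval_mul, eval_pow, eval_X, charpoly_eval'']
  have h1 : x • (1 : Matrix m m ℂ) - A * B = x • ((1 : Matrix m m ℂ) - x⁻¹ • (A * B)) := by
    rw [smul_sub, smul_smul, mul_inv_cancel₀ hx, one_smul]
  have h2 : x • (1 : Matrix n n ℂ) - B * A = x • ((1 : Matrix n n ℂ) - x⁻¹ • (B * A)) := by
    rw [smul_sub, smul_smul, mul_inv_cancel₀ hx, one_smul]
  rw [h1, h2, Matrix.det_smul, Matrix.det_smul]
  have key : ((1 : Matrix m m ℂ) - x⁻¹ • (A * B)).det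
      = ((1 : Matrix n n ℂ) - x⁻¹ • (B * A)).det := by
    have h := Matrix.det_one_sub_mul_comm (x⁻¹ • A) B
    rw [Matrix.smul_mul] at h
    rw [h, Matrix.mul_smul]
  rw [key]; ring

section lineAux

variable {V : Type*} [Fintype V] [DecidableEq V]

/-- Auxiliary matrix `B`: incidence of edges with their heads. -/
noncomputable def Bmat (E : Finset (V × V)) : Matrix {e // e ∈ E} V ℂ :=
  fun e v => if (e : V × V).2 = v then 1 else 0

/-- Auxiliary matrix `C`: incidence of vertices with outgoing edges, normalized. -/
noncomputable def Cmat (E : Finset (V × V)) : Matrix V {e // e ∈ E} ℂ :=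
  fun v f => if (f : V × V).1 = v then ((outdeg E v : ℝ) : ℂ)⁻¹ else 0

lemma outdeg_lineE (E : Finset (V × V)) (e : {e // e ∈ E}) :
    outdeg (lineE E) e = outdeg E (e : V × V).2 := by
  classical
  unfold outdeg lineE
  rw [Finset.filter_filter]
  refine Finset.card_bij' (fun p _ => ((p.2 : {e // e ∈ E}) : V × V))
      (fun f hf => (e, ⟨f, (Finset.mem_filter.mp hf).1⟩)) ?_ ?_ ?_ ?_
  · intro p hp
    simp only [Finset.mem_filter, Finset.mem_univ, true_and] at hp
    simp only [Finset.mem_filter]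
    refine ⟨(p.2 : {e // e ∈ E}).2, ?_⟩
    rw [← hp.2]
    exact hp.1.symm
  · intro f hf
    simp only [Finset.mem_filter] at hf
    simp only [Finset.mem_filter, Finset.mem_univ, true_and]
    exact ⟨hf.2.symm, trivial⟩
  · intro p hp
    simp only [Finset.mem_filter, Finset.mem_univ, true_and] at hp
    refine Prod.ext hp.2.symm ?_
    exact Subtype.ext rfl
  · intro f hf
    rfl

lemma transMat_lineE_factor (E : Finset (V × V)) :
    (transMat (lineE E)).map Complex.ofReal = Bmat E * Cmat E := by
  classical
  ext e f
  have hmem : ((e, f) ∈ lineE E) ↔ (e : V × V).2 = (f : V × V).1 := by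
    simp [lineE]
  simp only [Matrix.map_apply, Matrix.mul_apply, Bmat, Cmat, transMat, hmem, outdeg_lineE,
    ite_mul, one_mul, zero_mul, apply_ite Complex.ofReal, Complex.ofReal_inv,
    Complex.ofReal_zero]
  rw [Finset.sum_ite_eq]
  simp only [Finset.mem_univ, if_true]
  by_cases h : (e : V × V).2 = (f : V × V).1
  · rw [if_pos h, if_pos h.symm]
  · rw [if_neg h, if_neg fun hh => h hh.symm]

lemma transMat_factor (E : Finset (V × V)) :
    (transMat E).map Complex.ofReal = Cmat E * Bmat E := by
  classical
  ext v w
  simp only [Matrix.map_apply, Matrix.mul_apply, Bmat, Cmat, transMat]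
  have hterm : ∀ f : {e // e ∈ E},
      (if (f : V × V).1 = v then ((outdeg E v : ℝ) : ℂ)⁻¹ else 0) *
        (if (f : V × V).2 = w then 1 else 0)
      = if (f : V × V) = (v, w) then ((outdeg E v : ℝ) : ℂ)⁻¹ else 0 := by
    intro f
    by_cases h1 : (f : V × V).1 = v <;> by_cases h2 : (f : V × V).2 = w <;>
      simp [h1, h2, Prod.ext_iff]
  rw [Finset.sum_congr rfl fun f _ => hterm f]
  rw [Finset.sum_coe_sort E (fun x => if x = (v, w) then ((outdeg E v : ℝ) : ℂ)⁻¹ else 0)]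
  rw [Finset.sum_ite_eq' E (v, w) (fun _ => ((outdeg E v : ℝ) : ℂ)⁻¹)]
  by_cases h : (v, w) ∈ E <;> simp [h]

end lineAux

/-- For a strongly connected digraph `G` with `n` vertices and `m` edges, the Kemeny
constant of the simple random walk on the line digraph satisfies
`K(L(G)) = K(G) + m - n`. -/
theorem stmt8 (E : Finset (V × V)) (hconn : StronglyConnected E) :
    kemeny (transMat (lineE E)) =
      kemeny (transMat E) + (E.card : ℂ) - (Fintype.card V : ℂ) := by
  classical
  set p := ((transMat (lineE E)).map Complex.ofReal).charpoly with hp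
  set q := ((transMat E).map Complex.ofReal).charpoly with hq
  have hcard : Fintype.card {e // e ∈ E} = E.card := Fintype.card_coe E
  have key : p * X ^ Fintype.card V = q * X ^ E.card := by
    rw [hp, hq, transMat_lineE_factor E, transMat_factor E, ← hcard]
    exact charpoly_mul_comm_pow (Bmat E) (Cmat E)
  have pne : p ≠ 0 := (Matrix.charpoly_monic _).ne_zero
  have qne : q ≠ 0 := (Matrix.charpoly_monic _).ne_zero
  have e1 : (p * X ^ Fintype.card V).roots
      = p.roots + Fintype.card V • ({0} : Multiset ℂ) := by
    rw [Polynomial.roots_mul (mul_ne_zero pne (pow_ne_zero _ Polynomial.X_ne_zero)),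
      Polynomial.roots_pow, Polynomial.roots_X]
  have e2 : (q * X ^ E.card).roots = q.roots + E.card • ({0} : Multiset ℂ) := by
    rw [Polynomial.roots_mul (mul_ne_zero qne (pow_ne_zero _ Polynomial.X_ne_zero)),
      Polynomial.roots_pow, Polynomial.roots_X]
  have hroots : p.roots + Fintype.card V • ({0} : Multiset ℂ)
      = q.roots + E.card • ({0} : Multiset ℂ) := by
    rw [← e1, ← e2, key]
  have h0 : ∀ k : ℕ, (1 : ℂ) ∉ (k • ({0} : Multiset ℂ)) := by
    intro k h
    rw [Multiset.nsmul_singleton] at h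
    exact one_ne_zero (Multiset.eq_of_mem_replicate h)
  have herase : p.roots.erase 1 + Fintype.card V • ({0} : Multiset ℂ)
      = q.roots.erase 1 + E.card • ({0} : Multiset ℂ) := by
    calc p.roots.erase 1 + Fintype.card V • ({0} : Multiset ℂ)
        = (p.roots + Fintype.card V • ({0} : Multiset ℂ)).erase 1 :=
          (Multiset.erase_add_left_neg _ (h0 _)).symm
      _ = (q.roots + E.card • ({0} : Multiset ℂ)).erase 1 := by rw [hroots]
      _ = q.roots.erase 1 + E.card • ({0} : Multiset ℂ) :=
          Multiset.erase_add_left_neg _ (h0 _)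
  have hsum := congrArg (fun s : Multiset ℂ => (s.map fun z => (1 - z)⁻¹).sum) herase
  simp only [Multiset.map_add, Multiset.sum_add] at hsum
  have hz : ∀ k : ℕ, ((k • ({0} : Multiset ℂ)).map fun z => (1 - z)⁻¹).sum = (k : ℂ) := by
    intro k
    rw [Multiset.nsmul_singleton, Multiset.map_replicate, Multiset.sum_replicate]
    simp
  rw [hz, hz] at hsum
  show ((p.roots.erase 1).map fun z => (1 - z)⁻¹).sum
      = ((q.roots.erase 1).map fun z => (1 - z)⁻¹).sum + (E.card : ℂ) - (Fintype.card V : ℂ)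
  linear_combination hsum
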